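/- Every arithmetic subsequence of a uniformly recurrent infinite word is uniformly recurrent. That is, if w : ℕ → A is uniformly recurrent and v(ℓ) = w(ℓq + p) for fixed integers q ≥ 1 and p ≥ 0, then v is uniformly recurrent. -/
import Mathlib

/-- A unidimensional infinite word is uniformly recurrent if for every length `n`
there is a bound `b` such that every length-`b` factor contains every length-`n` factor. -/
def UniformlyRecurrent {A : Type*} (w : ℕ → A) : Prop :=
  ∀ n : ℕ, ∃ b : ℕ, ∀ p m : ℕ, ∃ k : ℕ,
    m ≤ k ∧ k + n ≤ m + b ∧ ∀ j < n, w (k + j) = w (p + j)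

namespace Stmt6Aux

variable {A : Type*}

/-- The prefix of `w` of length `N` occurs at position `k`. -/
def Pref (w : ℕ → A) (N k : ℕ) : Prop := ∀ j, j < N → w (k + j) = w j

theorem pref_mono {w : ℕ → A} {N M k : ℕ} (h : Pref w N k) (hMN : M ≤ N) : Pref w M k :=
  fun j hj => h j (lt_of_lt_of_le hj hMN)

theorem pref_zero (w : ℕ → A) (N : ℕ) : Pref w N 0 := fun j _ => by rw [Nat.zero_add]

theorem exists_pref (w : ℕ → A) (hw : UniformlyRecurrent w) (N : ℕ) :
    ∃ b, ∀ m, ∃ k, m ≤ k ∧ k + N ≤ m + b ∧ Pref w N k := by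
  obtain ⟨b, hb⟩ := hw N
  refine ⟨b, fun m => ?_⟩
  obtain ⟨k, h1, h2, h3⟩ := hb 0 m
  exact ⟨k, h1, h2, fun j hj => by simpa using h3 j hj⟩

open scoped Classical in
/-- Residues mod `q` of positions where the length-`N` prefix of `w` occurs. -/
noncomputable def resSet (w : ℕ → A) (q : ℕ) [NeZero q] (N : ℕ) : Finset (ZMod q) :=
  Finset.univ.filter (fun r => ∃ k : ℕ, (k : ZMod q) = r ∧ Pref w N k)

theorem mem_resSet {w : ℕ → A} {q : ℕ} [NeZero q] {N : ℕ} {r : ZMod q} :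
    r ∈ resSet w q N ↔ ∃ k : ℕ, (k : ZMod q) = r ∧ Pref w N k := by
  classical
  simp [resSet]

theorem resSet_anti {w : ℕ → A} {q : ℕ} [NeZero q] {N M : ℕ} (h : M ≤ N) :
    resSet w q N ⊆ resSet w q M := by
  intro r hr
  obtain ⟨k, hk1, hk2⟩ := mem_resSet.mp hr
  exact mem_resSet.mpr ⟨k, hk1, pref_mono hk2 h⟩

theorem resSet_stab (w : ℕ → A) (q : ℕ) [NeZero q] :
    ∃ N₁, ∀ N, N₁ ≤ N → resSet w q N = resSet w q N₁ := by
  have hne : (Set.range fun N => (resSet w q N).card).Nonempty := ⟨_, 0, rfl⟩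
  obtain ⟨N₁, hN₁⟩ := Nat.sInf_mem hne
  refine ⟨N₁, fun N hN => ?_⟩
  refine Finset.eq_of_subset_of_card_le (resSet_anti hN) ?_
  have h1 : (resSet w q N₁).card = sInf (Set.range fun N => (resSet w q N).card) := hN₁
  have h2 : sInf (Set.range fun N => (resSet w q N).card) ≤ (resSet w q N).card :=
    Nat.sInf_le ⟨N, rfl⟩
  omega

theorem zero_mem_resSet (w : ℕ → A) (q : ℕ) [NeZero q] (N : ℕ) :
    (0 : ZMod q) ∈ resSet w q N :=
  mem_resSet.mpr ⟨0, by simp, pref_zero w N⟩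

theorem add_mem_resSet {w : ℕ → A} {q : ℕ} [NeZero q] {N₁ : ℕ}
    (hstab : ∀ N, N₁ ≤ N → resSet w q N = resSet w q N₁)
    {r₁ r₂ : ZMod q} (h1 : r₁ ∈ resSet w q N₁) (h2 : r₂ ∈ resSet w q N₁) :
    r₁ + r₂ ∈ resSet w q N₁ := by
  obtain ⟨k₂, hk₂r, hk₂⟩ := mem_resSet.mp h2
  have h1' : r₁ ∈ resSet w q (k₂ + N₁) := by
    rw [hstab _ (Nat.le_add_left _ _)]; exact h1
  obtain ⟨k₁, hk₁r, hk₁⟩ := mem_resSet.mp h1'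
  refine mem_resSet.mpr ⟨k₁ + k₂, by push_cast [hk₁r, hk₂r]; ring, fun j hj => ?_⟩
  have h := hk₁ (k₂ + j) (by omega)
  rw [← Nat.add_assoc] at h
  rw [h]
  exact hk₂ j hj

theorem nsmul_mem_resSet {w : ℕ → A} {q : ℕ} [NeZero q] {N₁ : ℕ}
    (hstab : ∀ N, N₁ ≤ N → resSet w q N = resSet w q N₁)
    {r : ZMod q} (h : r ∈ resSet w q N₁) (m : ℕ) : m • r ∈ resSet w q N₁ := by
  induction m with
  | zero => simpa using zero_mem_resSet w q N₁
  | succ m ih =>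
    rw [succ_nsmul]
    exact add_mem_resSet hstab ih h

theorem neg_mem_resSet {w : ℕ → A} {q : ℕ} [NeZero q] {N₁ : ℕ}
    (hstab : ∀ N, N₁ ≤ N → resSet w q N = resSet w q N₁)
    {r : ZMod q} (h : r ∈ resSet w q N₁) : -r ∈ resSet w q N₁ := by
  have hq1 : 1 ≤ q := Nat.one_le_iff_ne_zero.mpr (NeZero.ne q)
  have key : ((q - 1 : ℕ)) • r = -r := by
    rw [nsmul_eq_mul]
    have : ((q - 1 : ℕ) : ZMod q) = -1 := by
      push_cast [Nat.cast_sub hq1]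
      simp [ZMod.natCast_self]
    rw [this, neg_one_mul]
  rw [← key]
  exact nsmul_mem_resSet hstab h _

/-- Key lemma: the prefixes of `w` recur syndetically at positions divisible by `q`. -/
theorem aligned_prefix (w : ℕ → A) (hw : UniformlyRecurrent w) (q : ℕ) [NeZero q] (N : ℕ) :
    ∃ B, ∀ m, ∃ t, m ≤ t ∧ t ≤ m + B ∧ q ∣ t ∧ Pref w N t := by
  classical
  obtain ⟨N₁, hstab⟩ := resSet_stab w q
  set N₂ := max N N₁ with hN₂
  have hstab₂ : ∀ M, N₂ ≤ M → resSet w q M = resSet w q N₂ := by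
    intro M hM
    rw [hstab M (le_trans (le_max_right _ _) hM), hstab N₂ (le_max_right _ _)]
  -- for each residue r occurring, pick an occurrence of the N₂-prefix at residue -r
  have hneg : ∀ r : ZMod q, r ∈ resSet w q N₂ → -r ∈ resSet w q N₂ := by
    intro r hr
    rw [hstab N₂ (le_max_right _ _)] at hr ⊢
    exact neg_mem_resSet hstab hr
  let jf : ZMod q → ℕ := fun r =>
    if h : -r ∈ resSet w q N₂ then (mem_resSet.mp h).choose else 0
  set C := Finset.univ.sup jf with hC
  set N' := N₂ + C with hN'
  obtain ⟨b', hb'⟩ := exists_pref w hw N'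
  refine ⟨b' + C, fun m => ?_⟩
  obtain ⟨k, hk1, hk2, hk3⟩ := hb' m
  have hkres : ((k : ZMod q)) ∈ resSet w q N₂ := by
    rw [← hstab₂ N' (Nat.le_add_right _ _)]
    exact mem_resSet.mpr ⟨k, rfl, hk3⟩
  have hnegk : -((k : ZMod q)) ∈ resSet w q N₂ := hneg _ hkres
  set j := jf (k : ZMod q) with hjdef
  have hj : (j : ZMod q) = -(k : ZMod q) ∧ Pref w N₂ j := by
    have := (mem_resSet.mp hnegk).choose_spec
    simpa [hjdef, jf, dif_pos hnegk] using this
  have hjC : j ≤ C := Finset.le_sup (f := jf) (Finset.mem_univ ((k : ZMod q)))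
  refine ⟨k + j, le_trans hk1 (Nat.le_add_right _ _), by omega, ?_, ?_⟩
  · have : ((k + j : ℕ) : ZMod q) = 0 := by push_cast [hj.1]; ring
    exact (ZMod.natCast_eq_zero_iff _ _).mp this
  · intro i hi
    have h1 := hk3 (j + i) (by omega)
    rw [← Nat.add_assoc] at h1
    rw [h1]
    exact hj.2 i (lt_of_lt_of_le hi (le_max_left _ _))

end Stmt6Aux

open Stmt6Aux in
theorem stmt_6 {A : Type*} [Finite A] (w : ℕ → A) (hw : UniformlyRecurrent w)
    (q p : ℕ) (hq : 1 ≤ q) :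
    UniformlyRecurrent (fun ℓ => w (ℓ * q + p)) := by
  haveI : NeZero q := ⟨by omega⟩
  haveI := Fintype.ofFinite A
  intro n
  classical
  set v : ℕ → A := fun ℓ => w (ℓ * q + p) with hv
  let occ : (Fin n → A) → Prop := fun g => ∃ s : ℕ, ∀ j : Fin n, v (s + j) = g j
  let sg : (Fin n → A) → ℕ := fun g => if h : occ g then h.choose else 0
  set S : ℕ := Finset.univ.sup sg with hS
  obtain ⟨B, hB⟩ := aligned_prefix w hw q ((S + n) * q + p + 1)
  refine ⟨B + S + n, fun p' m => ?_⟩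
  set g : Fin n → A := fun j => v (p' + j) with hg
  have hocc : occ g := ⟨p', fun j => rfl⟩
  have hsg : ∀ j : Fin n, v (sg g + j) = g j := by
    have := hocc.choose_spec
    simpa [sg, dif_pos hocc] using this
  have hsgS : sg g ≤ S := Finset.le_sup (Finset.mem_univ g)
  obtain ⟨t, ht1, ht2, ⟨t', rfl⟩, ht4⟩ := hB (m * q)
  have ht'm : m ≤ t' := by
    refine Nat.le_of_mul_le_mul_left ?_ (show 0 < q by omega)
    rw [Nat.mul_comm q m]
    exact ht1
  have ht'B : t' ≤ m + B := by
    refine Nat.le_of_mul_le_mul_left ?_ (show 0 < q by omega)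
    have hBq : B ≤ B * q := Nat.le_mul_of_pos_right B (by omega)
    calc q * t' ≤ m * q + B := ht2
      _ ≤ m * q + B * q := by omega
      _ = q * (m + B) := by ring
  refine ⟨t' + sg g, by omega, by omega, fun j hj => ?_⟩
  show v (t' + sg g + j) = v (p' + j)
  have key : v (t' + sg g + j) = v (sg g + j) := by
    show w ((t' + sg g + j) * q + p) = w ((sg g + j) * q + p)
    have harith : (t' + sg g + j) * q + p = q * t' + ((sg g + j) * q + p) := by ring
    rw [harith]
    refine ht4 _ ?_
    have hle : (sg g + j) * q ≤ (S + n) * q := Nat.mul_le_mul_right _ (by omega)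
    omega
  rw [key]
  have := hsg ⟨j, hj⟩
  rw [hg] at this
  simpa using this
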